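/- For a random recursive tree T_n on {0,1,...,n}, remove a uniformly random edge, splitting T_n into the subtree τ⁰ containing the root and the complementary subtree τ*. Then P(|τ*| = j) = (n+1)/(n j (j+1)) for j = 1, ..., n. -/

import Mathlib

open MeasureTheory ProbabilityTheory
open scoped ENNReal

/-- The parent map of a recursive tree on `{0,1,...}` determined by the attachment choices
`a`: vertex `i+1` is attached to vertex `a i ≤ i`, and `0` is the root. -/
def rrtParent {Ω : Type*} (a : ℕ → Ω → ℕ) (ω : Ω) : ℕ → ℕ
  | 0 => 0
  | i + 1 => a i ω

namespace RRTAux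

open Finset

attribute [local instance] Classical.propDecidable

/-- parent map from a plain attachment function. -/
def par (g : ℕ → ℕ) : ℕ → ℕ := rrtParent (fun i (_ : Unit) => g i) ()

@[simp] lemma par_zero (g : ℕ → ℕ) : par g 0 = 0 := rfl
@[simp] lemma par_succ (g : ℕ → ℕ) (i : ℕ) : par g (i + 1) = g i := rfl

def Reach (g : ℕ → ℕ) (e v : ℕ) : Prop := ∃ m, (par g)^[m] v = e

noncomputable def D (g : ℕ → ℕ) (n e : ℕ) : ℕ :=
  Nat.card {v : ℕ | v ≤ n ∧ Reach g e v}

/-- validity -/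
def Valid (g : ℕ → ℕ) : Prop := ∀ i, g i ≤ i

lemma par_le {g : ℕ → ℕ} (hg : Valid g) (v : ℕ) : par g v ≤ v := by
  cases v with
  | zero => simp
  | succ i => simpa using (hg i).trans (Nat.le_succ i)

lemma iterate_le {g : ℕ → ℕ} (hg : Valid g) (m v : ℕ) : (par g)^[m] v ≤ v := by
  induction m with
  | zero => simp
  | succ m ih =>
    rw [Function.iterate_succ_apply']
    exact (par_le hg _).trans ih

lemma par_agree {g g' : ℕ → ℕ} {n : ℕ} (h : ∀ i < n, g i = g' i) {v : ℕ} (hv : v ≤ n) :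
    par g v = par g' v := by
  cases v with
  | zero => rfl
  | succ i => simpa using h i (by omega)

lemma iterate_agree {g g' : ℕ → ℕ} {n : ℕ} (hg : Valid g)
    (h : ∀ i < n, g i = g' i) (m : ℕ) {v : ℕ} (hv : v ≤ n) :
    (par g)^[m] v = (par g')^[m] v := by
  induction m generalizing v with
  | zero => rfl
  | succ m ih =>
    rw [Function.iterate_succ_apply, Function.iterate_succ_apply,
      ← par_agree h hv]
    exact ih ((par_le hg v).trans hv)

lemma reach_agree {g g' : ℕ → ℕ} {n : ℕ} (hg : Valid g)
    (h : ∀ i < n, g i = g' i) {e v : ℕ} (hv : v ≤ n) :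
    Reach g e v ↔ Reach g' e v := by
  unfold Reach
  constructor <;> rintro ⟨m, hm⟩ <;> exact ⟨m, by
    first
    | rw [← iterate_agree hg h m hv]; exact hm
    | rw [iterate_agree hg h m hv]; exact hm⟩

lemma D_agree {g g' : ℕ → ℕ} {n : ℕ} (hg : Valid g)
    (h : ∀ i < n, g i = g' i) (e : ℕ) : D g n e = D g' n e := by
  have hs : {v : ℕ | v ≤ n ∧ Reach g e v} = {v | v ≤ n ∧ Reach g' e v} := by
    ext v
    exact and_congr_right fun hv => reach_agree hg h hv
  unfold D
  rw [hs]

lemma reach_le {g : ℕ → ℕ} (hg : Valid g) {e v : ℕ} (h : Reach g e v) : e ≤ v := by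
  obtain ⟨m, hm⟩ := h
  exact hm ▸ iterate_le hg m v

lemma reach_self (g : ℕ → ℕ) (v : ℕ) : Reach g v v := ⟨0, rfl⟩

/-- relation to Finset counting -/
lemma D_eq_card_filter (g : ℕ → ℕ) (n e : ℕ) :
    D g n e = ((Finset.range (n + 1)).filter fun v => Reach g e v).card := by
  unfold D
  rw [Nat.card_eq_card_finite_toFinset (Set.Finite.subset (Set.finite_Iic n)
    (fun v hv => hv.1))]
  congr 1
  ext v
  simp [Nat.lt_succ_iff, and_comm]

lemma not_reach_top {g : ℕ → ℕ} (hg : Valid g) {n v : ℕ} (hv : v ≤ n) :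
    ¬ Reach g (n + 1) v := fun h => by
  have := reach_le hg h
  omega

lemma D_top {g : ℕ → ℕ} (hg : Valid g) (n : ℕ) : D g (n + 1) (n + 1) = 1 := by
  have hs : {v : ℕ | v ≤ n + 1 ∧ Reach g (n + 1) v} = {n + 1} := by
    ext v
    simp only [Set.mem_setOf_eq, Set.mem_singleton_iff]
    constructor
    · rintro ⟨hv, hr⟩
      have := reach_le hg hr
      omega
    · rintro rfl
      exact ⟨le_refl _, reach_self _ _⟩
  unfold D
  rw [hs]
  simp

lemma reach_succ_iff {g : ℕ → ℕ} {n e : ℕ} (he : e ≤ n) :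
    Reach g e (n + 1) ↔ Reach g e (g n) := by
  constructor
  · rintro ⟨m, hm⟩
    cases m with
    | zero => simp at hm; omega
    | succ m =>
      rw [Function.iterate_succ_apply, par_succ] at hm
      exact ⟨m, hm⟩
  · rintro ⟨m, hm⟩
    exact ⟨m + 1, by rw [Function.iterate_succ_apply, par_succ]; exact hm⟩

lemma D_succ (g : ℕ → ℕ) {n e : ℕ} (he : e ≤ n) :
    D g (n + 1) e = D g n e + (if Reach g e (g n) then 1 else 0) := by
  have hfin : {v : ℕ | v ≤ n ∧ Reach g e v}.Finite :=
    Set.Finite.subset (Set.finite_Iic n) (fun v hv => hv.1)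
  by_cases hr : Reach g e (g n)
  · have hs : {v : ℕ | v ≤ n + 1 ∧ Reach g e v}
        = insert (n + 1) {v : ℕ | v ≤ n ∧ Reach g e v} := by
      ext v
      simp only [Set.mem_setOf_eq, Set.mem_insert_iff]
      constructor
      · rintro ⟨hv, hrv⟩
        rcases Nat.lt_or_ge v (n + 1) with h | h
        · exact Or.inr ⟨by omega, hrv⟩
        · left; omega
      · rintro (rfl | ⟨hv, hrv⟩)
        · exact ⟨le_refl _, (reach_succ_iff he).2 hr⟩
        · exact ⟨by omega, hrv⟩
    unfold D
    rw [hs, if_pos hr, Nat.card_coe_set_eq, Nat.card_coe_set_eq,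
      Set.ncard_insert_of_notMem (by simp) hfin]
  · have hs : {v : ℕ | v ≤ n + 1 ∧ Reach g e v} = {v : ℕ | v ≤ n ∧ Reach g e v} := by
      ext v
      simp only [Set.mem_setOf_eq]
      constructor
      · rintro ⟨hv, hrv⟩
        refine ⟨?_, hrv⟩
        rcases Nat.lt_or_ge v (n + 1) with h | h
        · omega
        · have : v = n + 1 := by omega
          subst this
          exact absurd ((reach_succ_iff he).1 hrv) hr
      · rintro ⟨hv, hrv⟩; exact ⟨by omega, hrv⟩
    unfold D
    rw [hs, if_neg hr]
    omega


/-! ### Counting trees -/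

def T (n : ℕ) : Finset (Fin n → ℕ) := Fintype.piFinset fun i => Finset.range (i.1 + 1)

def extF {n : ℕ} (f : Fin n → ℕ) : ℕ → ℕ := fun i => if h : i < n then f ⟨i, h⟩ else 0

lemma extF_valid {n : ℕ} {f : Fin n → ℕ} (hf : f ∈ T n) : Valid (extF f) := by
  intro i
  unfold extF
  split
  · next h =>
    have := Fintype.mem_piFinset.1 hf ⟨i, h⟩
    simp only [Finset.mem_range] at this
    omega
  · omega

lemma extF_lt {n : ℕ} (f : Fin n → ℕ) {i : ℕ} (h : i < n) : extF f i = f ⟨i, h⟩ :=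
  dif_pos h

lemma extF_snoc_lt {n : ℕ} (f : Fin n → ℕ) (c : ℕ) {i : ℕ} (h : i < n) :
    extF (Fin.snoc f c) i = extF f i := by
  rw [extF_lt _ (by omega : i < n + 1), extF_lt _ h]
  simp [Fin.snoc, h]

lemma extF_snoc_last {n : ℕ} (f : Fin n → ℕ) (c : ℕ) :
    extF (Fin.snoc f c) n = c := by
  rw [extF_lt _ (by omega : n < n + 1)]
  simp [Fin.snoc]

noncomputable def cnt (n e j : ℕ) : ℕ :=
  ((T n).filter fun f => D (extF f) n e = j).card

noncomputable def A (n j : ℕ) : ℕ := ∑ e ∈ Finset.Icc 1 n, cnt n e j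

lemma card_T (n : ℕ) : (T n).card = n.factorial := by
  rw [T, Fintype.card_piFinset]
  simp only [Finset.card_range]
  rw [Fin.prod_univ_eq_prod_range (fun i => i + 1) n]
  exact Finset.prod_range_add_one_eq_factorial n

lemma sum_T_succ {M : Type*} [AddCommMonoid M] (n : ℕ) (F : (Fin (n + 1) → ℕ) → M) :
    ∑ f ∈ T (n + 1), F f = ∑ f ∈ T n, ∑ c ∈ Finset.range (n + 1), F (Fin.snoc f c) := by
  rw [← Finset.sum_product']
  refine Finset.sum_nbij' (fun f => (Fin.init f, f (Fin.last n))) (fun p => Fin.snoc p.1 p.2)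
    ?_ ?_ ?_ ?_ ?_
  · intro f hf
    rw [T, Fin.mem_piFinset_iff_last_init] at hf
    simp only [Finset.mem_product]
    refine ⟨?_, ?_⟩
    · rw [T]
      convert hf.2 using 2
      rfl
    · simpa using hf.1
  · intro p hp
    simp only [Finset.mem_product] at hp
    rw [T, Fin.mem_piFinset_iff_last_init]
    constructor
    · simpa [Fin.snoc_last] using hp.2
    · rw [Fin.init_snoc]
      convert hp.1 using 2
      rfl
  · intro f _
    exact Fin.snoc_init_self f
  · intro p _
    simp [Fin.init_snoc, Fin.snoc_last]
  · intro f _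
    exact (congrArg F (Fin.snoc_init_self f)).symm


lemma snoc_mem_T {n : ℕ} {f : Fin n → ℕ} (hf : f ∈ T n) {c : ℕ} (hc : c ≤ n) :
    Fin.snoc f c ∈ T (n + 1) := by
  rw [T, Fintype.mem_piFinset]
  intro i
  refine Fin.lastCases ?_ ?_ i
  · simp only [Fin.snoc_last, Fin.val_last, Finset.mem_range]
    omega
  · intro k
    simp only [Fin.snoc_castSucc, Fin.coe_castSucc]
    exact Fintype.mem_piFinset.1 hf k

lemma cnt_top (n j : ℕ) : cnt (n + 1) (n + 1) j = if j = 1 then (n + 1).factorial else 0 := by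
  unfold cnt
  rw [Finset.filter_congr (q := fun _ => j = 1)
    (fun f hf => by rw [D_top (extF_valid hf)]; simp [eq_comm])]
  by_cases hj : j = 1
  · simp [hj, card_T]
  · simp [hj]

lemma cnt_succ {n e j : ℕ} (hen : e ≤ n) (hj : 1 ≤ j) :
    cnt (n + 1) e j = (j - 1) * cnt n e (j - 1) + (n + 1 - j) * cnt n e j := by
  unfold cnt
  rw [Finset.card_filter, sum_T_succ]
  have hstep : ∀ f ∈ T n, ∀ c ∈ Finset.range (n + 1),
      D (extF (Fin.snoc f c)) (n + 1) e
        = D (extF f) n e + (if Reach (extF f) e c then 1 else 0) := by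
    intro f hf c hc
    rw [Finset.mem_range] at hc
    have hfc : Fin.snoc f c ∈ T (n + 1) := snoc_mem_T hf (by omega)
    have hval' := extF_valid hfc
    have hagree : ∀ i < n, extF (Fin.snoc f c) i = extF f i :=
      fun i hi => extF_snoc_lt f c hi
    rw [D_succ _ hen, extF_snoc_last,
      D_agree hval' hagree, reach_agree hval' hagree (by omega : c ≤ n)]
  calc ∑ f ∈ T n, ∑ c ∈ Finset.range (n + 1),
        (if D (extF (Fin.snoc f c)) (n + 1) e = j then 1 else 0)
      = ∑ f ∈ T n, ((if D (extF f) n e = j - 1 then j - 1 else 0)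
          + (if D (extF f) n e = j then n + 1 - j else 0)) := by
        refine Finset.sum_congr rfl fun f hf => ?_
        have hd : D (extF f) n e
            = ((Finset.range (n + 1)).filter fun c => Reach (extF f) e c).card :=
          D_eq_card_filter _ _ _
        have hcardle : ((Finset.range (n + 1)).filter fun c => Reach (extF f) e c).card ≤ n + 1 :=
          (Finset.card_filter_le _ _).trans (by simp)
        have hsplit : ∑ c ∈ Finset.range (n + 1),
            (if D (extF (Fin.snoc f c)) (n + 1) e = j then 1 else 0)
            = ∑ c ∈ Finset.range (n + 1),
              (if Reach (extF f) e c then (if D (extF f) n e + 1 = j then 1 else 0)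
                else (if D (extF f) n e = j then 1 else 0)) := by
          refine Finset.sum_congr rfl fun c hc => ?_
          rw [hstep f hf c hc]
          by_cases hr : Reach (extF f) e c <;> simp [hr]
        rw [hsplit, Finset.sum_ite, Finset.sum_const, Finset.sum_const,
          Finset.filter_not, Finset.card_sdiff_of_subset (Finset.filter_subset _ _),
          Finset.card_range, smul_eq_mul, smul_eq_mul, ← hd]
        set d := D (extF f) n e with hdd
        have hdle : d ≤ n + 1 := by rw [hd]; exact hcardle
        by_cases h1 : d + 1 = j <;> by_cases h2 : d = j <;>
          simp [h1, h2, show (d = j - 1) ↔ (d + 1 = j) by omega] <;> omega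
    _ = (j - 1) * cnt n e (j - 1) + (n + 1 - j) * cnt n e j := by
        rw [Finset.sum_add_distrib]
        congr 1
        · rw [← Finset.sum_filter, Finset.sum_const, smul_eq_mul, mul_comm]
          rfl
        · rw [← Finset.sum_filter, Finset.sum_const, smul_eq_mul, mul_comm]
          rfl


lemma A_succ (n j : ℕ) (hj : 1 ≤ j) :
    A (n + 1) j = (if j = 1 then (n + 1).factorial else 0)
      + ((j - 1) * A n (j - 1) + (n + 1 - j) * A n j) := by
  unfold A
  have hins : Finset.Icc 1 (n + 1) = insert (n + 1) (Finset.Icc 1 n) := by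
    ext x
    simp only [Finset.mem_Icc, Finset.mem_insert]
    omega
  rw [hins, Finset.sum_insert (by simp), cnt_top,
    Finset.sum_congr rfl (fun e he => cnt_succ (Finset.mem_Icc.1 he).2 hj),
    Finset.sum_add_distrib, ← Finset.mul_sum, ← Finset.mul_sum]

lemma A_spec : ∀ n, ∀ j, 1 ≤ j → j ≤ n → A n j * (j * (j + 1)) = n.factorial * (n + 1) := by
  intro n
  induction n with
  | zero => intro j h1 h2; omega
  | succ n ih =>
    intro j hj1 hj2
    rw [A_succ n j hj1]
    rcases eq_or_lt_of_le hj1 with h1 | h1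
    · -- j = 1
      obtain rfl : j = 1 := h1.symm
      have h : n * (A n 1 * (1 * (1 + 1))) = n * (n.factorial * (n + 1)) := by
        cases Nat.eq_zero_or_pos n with
        | inl h => subst h; rfl
        | inr h => rw [ih 1 le_rfl h]
      simp only [if_pos rfl]
      rw [show (1:ℕ) - 1 = 0 from rfl, show n + 1 - 1 = n by omega, zero_mul, zero_add]
      calc ((n + 1).factorial + n * A n 1) * (1 * (1 + 1))
          = 2 * (n + 1).factorial + n * (A n 1 * (1 * (1 + 1))) := by ring
        _ = 2 * (n + 1).factorial + n * (n.factorial * (n + 1)) := by rw [h]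
        _ = (n + 1).factorial * (n + 1 + 1) := by
            rw [Nat.factorial_succ]; ring
    · -- j ≥ 2
      obtain ⟨k, rfl⟩ : ∃ k, j = k + 1 := ⟨j - 1, by omega⟩
      have hk1 : 1 ≤ k := by omega
      have hk2 : k ≤ n := by omega
      have ihk := ih k hk1 hk2
      have h2 : (n + 1 - (k + 1)) * (A n (k + 1) * ((k + 1) * (k + 1 + 1)))
          = (n + 1 - (k + 1)) * (n.factorial * (n + 1)) := by
        rcases Nat.lt_or_ge k n with h | h
        · rw [ih (k + 1) (by omega) (by omega)]
        · have : n + 1 - (k + 1) = 0 := by omega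
          rw [this]; ring
      have hif : (if k + 1 = 1 then (n + 1).factorial else 0) = 0 := by
        simp; omega
      rw [hif]
      have hsimp : (k + 1 - 1) = k := by omega
      rw [hsimp, zero_add]
      calc (k * A n k + (n + 1 - (k + 1)) * A n (k + 1)) * ((k + 1) * (k + 1 + 1))
          = (k + 1 + 1) * (A n k * (k * (k + 1)))
            + (n + 1 - (k + 1)) * (A n (k + 1) * ((k + 1) * (k + 1 + 1))) := by ring
        _ = (k + 1 + 1) * (n.factorial * (n + 1))
            + (n + 1 - (k + 1)) * (n.factorial * (n + 1)) := by rw [ihk, h2]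
        _ = ((k + 1 + 1) + (n + 1 - (k + 1))) * (n.factorial * (n + 1)) := by ring
        _ = (n + 1).factorial * (n + 1 + 1) := by
            have : (k + 1 + 1) + (n + 1 - (k + 1)) = n + 2 := by omega
            rw [this, Nat.factorial_succ]; ring


/-! ### Measure of basic cylinder events -/

lemma measure_Bset {Ω : Type*} [MeasurableSpace Ω] (μ : Measure Ω)
    {n : ℕ} (a : ℕ → Ω → ℕ) (E : Ω → ℕ)
    (hindep : iIndepFun
      (Sum.elim a (fun _ : Unit => E) : ℕ ⊕ Unit → Ω → ℕ) μ)
    (halaw : ∀ i, i < n → ∀ j ≤ i, μ {ω | a i ω = j} = ((i : ℝ≥0∞) + 1)⁻¹)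
    (hElaw : ∀ j, 1 ≤ j → j ≤ n → μ {ω | E ω = j} = ((n : ℝ≥0∞))⁻¹)
    {f : Fin n → ℕ} (hf : f ∈ T n) {e : ℕ} (he1 : 1 ≤ e) (he2 : e ≤ n) :
    μ ((⋂ i ∈ Finset.range n, a i ⁻¹' {extF f i}) ∩ E ⁻¹' {e})
      = ((n.factorial : ℝ≥0∞))⁻¹ * ((n : ℝ≥0∞))⁻¹ := by
  classical
  set X : ℕ ⊕ Unit → Ω → ℕ := Sum.elim a (fun _ : Unit => E) with hX
  set s : Finset (ℕ ⊕ Unit) := (Finset.range n).image Sum.inl ∪ {Sum.inr ()} with hs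
  set sets : ℕ ⊕ Unit → Set ℕ := Sum.elim (fun i => {extF f i}) (fun _ => {e}) with hsets
  have hmeas : ∀ k, k ∈ s → MeasurableSet (sets k) := by
    rintro (i | u) _ <;> exact measurableSet_singleton _
  have h := hindep.measure_inter_preimage_eq_mul s hmeas
  have hset_eq : (⋂ k ∈ s, X k ⁻¹' sets k)
      = (⋂ i ∈ Finset.range n, a i ⁻¹' {extF f i}) ∩ E ⁻¹' {e} := by
    ext ω
    simp only [hs, hX, hsets, Set.mem_iInter, Finset.mem_union, Finset.mem_image,
      Finset.mem_singleton, Set.mem_inter_iff, Set.mem_preimage, Sum.elim_inl, Sum.elim_inr]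
    constructor
    · intro h
      refine ⟨fun i hi => h (Sum.inl i) (Or.inl ⟨i, hi, rfl⟩), h (Sum.inr ()) (Or.inr rfl)⟩
    · rintro ⟨h1, h2⟩ k hk
      match k, hk with
      | Sum.inl i, hk =>
        obtain ⟨i', hi', hii'⟩ | h' := hk
        · have hii : i' = i := by simpa using hii'
          subst hii
          exact h1 i' hi'
        · simp at h'
      | Sum.inr u, _ => exact h2
  have hdisj : Disjoint ((Finset.range n).image Sum.inl) ({Sum.inr ()} : Finset (ℕ ⊕ Unit)) := by
    simp
  have hprod : ∏ k ∈ s, μ (X k ⁻¹' sets k)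
      = (∏ i ∈ Finset.range n, μ (a i ⁻¹' {extF f i})) * μ (E ⁻¹' {e}) := by
    rw [hs, Finset.prod_union hdisj, Finset.prod_image (fun x _ y _ h => Sum.inl.inj h)]
    simp [hX, hsets]
  rw [hset_eq, hprod] at h
  rw [h]
  have h1 : ∀ i ∈ Finset.range n, μ (a i ⁻¹' {extF f i}) = ((i : ℝ≥0∞) + 1)⁻¹ := by
    intro i hi
    rw [Finset.mem_range] at hi
    have : a i ⁻¹' {extF f i} = {ω | a i ω = extF f i} := rfl
    rw [this, halaw i hi (extF f i) (extF_valid hf i)]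
  have h2 : μ (E ⁻¹' {e}) = ((n : ℝ≥0∞))⁻¹ := by
    have : E ⁻¹' {e} = {ω | E ω = e} := rfl
    rw [this, hElaw e he1 he2]
  rw [Finset.prod_congr rfl h1, h2]
  congr 1
  rw [← ENNReal.prod_inv_distrib (fun i _ j _ _ => Or.inl (by simp))]
  congr 1
  have : (∏ i ∈ Finset.range n, ((i : ℝ≥0∞) + 1))
      = ((∏ i ∈ Finset.range n, (i + 1) : ℕ) : ℝ≥0∞) := by
    push_cast
    rfl
  rw [this, Finset.prod_range_add_one_eq_factorial]


end RRTAux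

open RRTAux in
/-- **Law of the size of the cut subtree (Meir–Moon).** For a random recursive tree `T_n` on
`{0,1,...,n}` (vertex `i+1` attached to a uniform vertex of `{0,…,i}`, independently), remove
a uniformly random edge `E ∈ {1,…,n}` (edges being labeled by their outer endpoints),
splitting `T_n` into the root component and the complementary subtree `τ*` consisting of the
vertices whose path to `0` passes through the removed edge. Then
`P(|τ*| = j) = (n+1)/(n j (j+1))` for `j = 1, ..., n`. -/
theorem rrt_cut_subtree_size
    {Ω : Type*} [MeasurableSpace Ω] (μ : Measure Ω) [IsProbabilityMeasure μ]
    (n : ℕ) (hn : 1 ≤ n)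
    (a : ℕ → Ω → ℕ) (E : Ω → ℕ)
    (hameas : ∀ i, Measurable (a i)) (hEmeas : Measurable E)
    (hadom : ∀ i ω, a i ω ≤ i)
    (hindep : iIndepFun
      (Sum.elim a (fun _ : Unit => E) : ℕ ⊕ Unit → Ω → ℕ) μ)
    (halaw : ∀ i, i < n → ∀ j ≤ i, μ {ω | a i ω = j} = ((i : ℝ≥0∞) + 1)⁻¹)
    (hElaw : ∀ j, 1 ≤ j → j ≤ n → μ {ω | E ω = j} = ((n : ℝ≥0∞))⁻¹) :
    ∀ j : ℕ, 1 ≤ j → j ≤ n →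
      μ {ω | Nat.card {v : ℕ | v ≤ n ∧ ∃ m : ℕ, (rrtParent a ω)^[m] v = E ω} = j}
        = ENNReal.ofReal (((n : ℝ) + 1) / ((n : ℝ) * (j : ℝ) * ((j : ℝ) + 1))) := by
  classical
  intro j hj1 hj2
  have hnne : (n : ℝ≥0∞) ≠ 0 := by
    simp only [ne_eq, Nat.cast_eq_zero]
    omega
  -- rewrite the event via `D`
  have hpar : ∀ ω, rrtParent a ω = par (fun i => a i ω) := by
    intro ω; funext v; cases v <;> rfl
  have hEv : {ω | Nat.card {v : ℕ | v ≤ n ∧ ∃ m : ℕ, (rrtParent a ω)^[m] v = E ω} = j}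
      = {ω | D (fun i => a i ω) n (E ω) = j} := by
    ext ω
    rw [Set.mem_setOf_eq, Set.mem_setOf_eq, hpar ω]
    rfl
  rw [hEv]
  set Ev := {ω | D (fun i => a i ω) n (E ω) = j} with hEvdef
  -- the good event G
  set G : Set Ω := ⋃ e ∈ Finset.Icc 1 n, E ⁻¹' {e} with hG
  have hGmeas : MeasurableSet G :=
    Finset.measurableSet_biUnion _ (fun e _ => hEmeas (measurableSet_singleton e))
  have hEdisj : (↑(Finset.Icc 1 n) : Set ℕ).PairwiseDisjoint
      (fun e => E ⁻¹' {e} : ℕ → Set Ω) := by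
    intro e _ e' _ hne
    refine Set.disjoint_left.2 fun ω h1 h2 => ?_
    exact hne ((Set.mem_preimage.1 h1).symm.trans (Set.mem_preimage.1 h2) : e = e')
  have hElaw' : ∀ e ∈ Finset.Icc 1 n, μ (E ⁻¹' {e}) = ((n : ℝ≥0∞))⁻¹ :=
    fun e he => hElaw e (Finset.mem_Icc.1 he).1 (Finset.mem_Icc.1 he).2
  have hμG : μ G = 1 := by
    rw [hG, measure_biUnion_finset hEdisj (fun e _ => hEmeas (measurableSet_singleton e)),
      Finset.sum_congr rfl hElaw',
      Finset.sum_const, Nat.card_Icc, nsmul_eq_mul]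
    have : (n + 1 - 1 : ℕ) = n := by omega
    rw [this]
    exact ENNReal.mul_inv_cancel hnne (ENNReal.natCast_ne_top n)
  have hμGc : μ Gᶜ = 0 := by
    have h := measure_compl hGmeas (measure_ne_top μ G)
    rw [hμG, measure_univ] at h
    simpa using h
  have hsplit : μ Ev = μ (Ev ∩ G) := by
    have h1 : μ (Ev ∩ G) + μ (Ev \ G) = μ Ev := measure_inter_add_diff Ev hGmeas
    have h2 : μ (Ev \ G) = 0 :=
      measure_mono_null (fun ω hω => hω.2) hμGc
    rw [← h1, h2, add_zero]
  -- decomposition of the event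
  have hkey : Ev ∩ G = ⋃ e ∈ Finset.Icc 1 n,
      ⋃ f ∈ (T n).filter (fun f => D (extF f) n e = j),
        ((⋂ i ∈ Finset.range n, a i ⁻¹' {extF f i}) ∩ E ⁻¹' {e}) := by
    ext ω
    simp only [Set.mem_inter_iff, Set.mem_setOf_eq, hEvdef, hG, Set.mem_iUnion,
      Set.mem_preimage, Set.mem_singleton_iff, Finset.mem_filter, Set.mem_iInter,
      Finset.mem_Icc, Finset.mem_range, exists_prop]
    constructor
    · rintro ⟨hD, e, he, hEe⟩
      have hval : Valid (fun i => a i ω) := fun i => hadom i ω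
      set f : Fin n → ℕ := fun i => a i.1 ω with hfdef
      have hfT : f ∈ T n := by
        rw [T, Fintype.mem_piFinset]
        intro i
        simp only [Finset.mem_range, hfdef]
        exact Nat.lt_succ_of_le (hadom i.1 ω)
      have hag : ∀ i' < n, (fun i => a i ω) i' = extF f i' := by
        intro i' hi'
        rw [extF_lt _ hi']
      refine ⟨e, he, f, ⟨hfT, ?_⟩, ?_, hEe⟩
      · rw [← D_agree hval hag e, ← hEe]
        exact hD
      · intro i hi
        exact hag i hi
    · rintro ⟨e, he, f, ⟨hfT, hfD⟩, hai, hEe⟩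
      have hval : Valid (fun i => a i ω) := fun i => hadom i ω
      have hag : ∀ i' < n, (fun i => a i ω) i' = extF f i' := fun i' hi' => hai i' hi'
      refine ⟨?_, e, he, hEe⟩
      rw [hEe, D_agree hval hag e]
      exact hfD
  -- measurability of cylinders
  have hBmeas : ∀ (e : ℕ) (f : Fin n → ℕ),
      MeasurableSet ((⋂ i ∈ Finset.range n, a i ⁻¹' {extF f i}) ∩ E ⁻¹' {e}) := by
    intro e f
    exact (Finset.measurableSet_biInter _
      (fun i _ => (hameas i) (measurableSet_singleton _))).inter
      (hEmeas (measurableSet_singleton _))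
  -- compute the measure of the union
  have houterdisj : (↑(Finset.Icc 1 n) : Set ℕ).PairwiseDisjoint
      (fun e => ⋃ f ∈ (T n).filter (fun f => D (extF f) n e = j),
        ((⋂ i ∈ Finset.range n, a i ⁻¹' {extF f i}) ∩ E ⁻¹' {e})) := by
    intro e _ e' _ hne
    refine Set.disjoint_left.2 fun ω h1 h2 => ?_
    simp only [Set.mem_iUnion, exists_prop] at h1 h2
    obtain ⟨f, _, _, hEe⟩ := h1
    obtain ⟨f', _, _, hEe'⟩ := h2
    exact hne ((Set.mem_singleton_iff.1 hEe).symm.trans (Set.mem_singleton_iff.1 hEe') : e = e')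
  have houter : μ (Ev ∩ G) = (A n j : ℝ≥0∞) * (((n.factorial : ℝ≥0∞))⁻¹ * ((n : ℝ≥0∞))⁻¹) := by
    rw [hkey, measure_biUnion_finset houterdisj (fun e _ => Finset.measurableSet_biUnion _
      (fun f _ => hBmeas e f))]
    have hinner : ∀ e ∈ Finset.Icc 1 n,
        μ (⋃ f ∈ (T n).filter (fun f => D (extF f) n e = j),
          ((⋂ i ∈ Finset.range n, a i ⁻¹' {extF f i}) ∩ E ⁻¹' {e}))
        = (cnt n e j : ℝ≥0∞) * (((n.factorial : ℝ≥0∞))⁻¹ * ((n : ℝ≥0∞))⁻¹) := by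
      intro e he
      obtain ⟨he1, he2⟩ := Finset.mem_Icc.1 he
      have hindisj : (↑((T n).filter (fun f => D (extF f) n e = j)) : Set (Fin n → ℕ)).PairwiseDisjoint
          (fun f => (⋂ i ∈ Finset.range n, a i ⁻¹' {extF f i}) ∩ E ⁻¹' {e}) := by
        intro f hf f' hf' hne
        refine Set.disjoint_left.2 fun ω h1 h2 => ?_
        apply hne
        funext i
        have e1 : a i.1 ω = extF f i.1 := by
          have := Set.mem_iInter₂.1 h1.1 i.1 (Finset.mem_range.2 i.2)
          simpa using this
        have e2 : a i.1 ω = extF f' i.1 := by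
          have := Set.mem_iInter₂.1 h2.1 i.1 (Finset.mem_range.2 i.2)
          simpa using this
        rw [← extF_lt f i.2, ← extF_lt f' i.2, ← e1, ← e2]
      rw [measure_biUnion_finset hindisj (fun f _ => hBmeas e f)]
      rw [Finset.sum_congr rfl
        (fun f hf => measure_Bset μ a E hindep halaw hElaw (Finset.mem_filter.1 hf).1 he1 he2),
        Finset.sum_const, nsmul_eq_mul]
      rfl
    rw [Finset.sum_congr rfl hinner, ← Finset.sum_mul]
    congr 1
    rw [A]
    push_cast
    rfl
  rw [hsplit, houter]
  -- final arithmetic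
  have hAs := A_spec n j hj1 hj2
  have hjpos : (0:ℝ) < (n : ℝ) * (j : ℝ) * ((j : ℝ) + 1) := by
    have h1 : (0:ℝ) < (n : ℝ) := by exact_mod_cast (by omega : 0 < n)
    have h2 : (0:ℝ) < (j : ℝ) := by exact_mod_cast (by omega : 0 < j)
    exact mul_pos (mul_pos h1 h2) (by linarith)
  rw [ENNReal.ofReal_div_of_pos hjpos,
    show ((n:ℝ) + 1) = ((n + 1 : ℕ) : ℝ) by push_cast; ring,
    show ((n:ℝ) * (j:ℝ) * ((j:ℝ) + 1)) = ((n * j * (j + 1) : ℕ) : ℝ) by push_cast; ring,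
    ENNReal.ofReal_natCast, ENNReal.ofReal_natCast]
  have hlhs : (A n j : ℝ≥0∞) * (((n.factorial : ℝ≥0∞))⁻¹ * ((n : ℝ≥0∞))⁻¹)
      = (A n j : ℝ≥0∞) / ((n.factorial * n : ℕ) : ℝ≥0∞) := by
    rw [div_eq_mul_inv, Nat.cast_mul,
      ENNReal.mul_inv (Or.inl (by simp [Nat.factorial_ne_zero])) (Or.inl (ENNReal.natCast_ne_top _))]
  rw [hlhs, ENNReal.div_eq_div_iff (by simp; omega) (ENNReal.natCast_ne_top _)
    (by simp [Nat.factorial_ne_zero]; omega) (ENNReal.natCast_ne_top _)]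
  rw [← Nat.cast_mul, ← Nat.cast_mul]
  norm_cast
  calc n * j * (j + 1) * A n j = A n j * (j * (j + 1)) * n := by ring
    _ = n.factorial * (n + 1) * n := by rw [hAs]
    _ = n.factorial * n * (n + 1) := by ring
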